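/- For a finite graph G and any matching M together with a set S of vertices not covered by M, consider the update in which each matched pair jointly selects a cost-non-increasing joint best response and each vertex in S selects a cost-non-increasing unilateral best response, such that no two updating units (pairs in M or singletons in S) are adjacent in G... if additionally the units are pairwise non-adjacent (no edge between any two distinct units), then the total change in global cost equals the sum of the individual units' local gains, and the global cost does not increase. -/

import Mathlib

open Finset

/-- Global cost of a complete assignment in a binary DCOP: each symmetric binary
constraint is counted once (the directed sum over neighbors counts it twice). -/
noncomputable def globalCost {V D : Type*} [Fintype V] (G : SimpleGraph V)
    [DecidableRel G.Adj] (R : V → V → D → D → ℝ) (σ : V → D) : ℝ :=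
  (∑ i, ∑ j ∈ G.neighborFinset i, R i j (σ i) (σ j)) / 2

/-- Pair-local cost of a pair of neighboring agents `(i, j)`: the constraint
between them, plus the constraints between `i` and its other neighbors, plus
the constraints between `j` and its other neighbors. -/
noncomputable def pairLocalCost {V D : Type*} [Fintype V] [DecidableEq V]
    (G : SimpleGraph V) [DecidableRel G.Adj] (R : V → V → D → D → ℝ)
    (i j : V) (σ : V → D) : ℝ :=
  R i j (σ i) (σ j) + ∑ k ∈ G.neighborFinset i \ {j}, R i k (σ i) (σ k)
    + ∑ k ∈ G.neighborFinset j \ {i}, R j k (σ j) (σ k)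

/-- Local cost of agent `i`: sum of costs of the constraints incident to `i`. -/
noncomputable def localCost {V D : Type*} [Fintype V] (G : SimpleGraph V)
    [DecidableRel G.Adj] (R : V → V → D → D → ℝ) (i : V) (σ : V → D) : ℝ :=
  ∑ j ∈ G.neighborFinset i, R i j (σ i) (σ j)

/-- if a set of updating units (matched pairs of `M` and
singletons of `S`) is pairwise non-adjacent, the updated assignment changes
only unit vertices, and each unit's local cost does not increase, then the
change in global cost equals the sum of the units' local changes, so the
global cost does not increase, and strictly decreases if some unit strictly
improves. -/
theorem stmt16 {V D : Type*} [Fintype V] [DecidableEq V] (G : SimpleGraph V)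
    [DecidableRel G.Adj] (R : V → V → D → D → ℝ)
    (hsym : ∀ i j a b, R i j a b = R j i b a)
    (M : Finset (V × V)) (S : Finset V)
    (hM : ∀ p ∈ M, G.Adj p.1 p.2)
    (hScover : ∀ v ∈ S, ∀ p ∈ M, v ≠ p.1 ∧ v ≠ p.2)
    (hmatch : ∀ p ∈ M, ∀ q ∈ M, p ≠ q →
      p.1 ≠ q.1 ∧ p.1 ≠ q.2 ∧ p.2 ≠ q.1 ∧ p.2 ≠ q.2)
    (hMM : ∀ p ∈ M, ∀ q ∈ M, p ≠ q →
      ¬ G.Adj p.1 q.1 ∧ ¬ G.Adj p.1 q.2 ∧ ¬ G.Adj p.2 q.1 ∧ ¬ G.Adj p.2 q.2)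
    (hMS : ∀ p ∈ M, ∀ v ∈ S, ¬ G.Adj v p.1 ∧ ¬ G.Adj v p.2)
    (hSS : ∀ u ∈ S, ∀ v ∈ S, u ≠ v → ¬ G.Adj u v)
    (σ σ' : V → D)
    (hfix : ∀ k, k ∉ S → (∀ p ∈ M, k ≠ p.1 ∧ k ≠ p.2) → σ' k = σ k)
    (hMle : ∀ p ∈ M,
      pairLocalCost G R p.1 p.2 σ' ≤ pairLocalCost G R p.1 p.2 σ)
    (hSle : ∀ v ∈ S, localCost G R v σ' ≤ localCost G R v σ) :
    (globalCost G R σ' - globalCost G R σ =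
        (∑ p ∈ M, (pairLocalCost G R p.1 p.2 σ' - pairLocalCost G R p.1 p.2 σ))
          + ∑ v ∈ S, (localCost G R v σ' - localCost G R v σ)) ∧
      globalCost G R σ' ≤ globalCost G R σ ∧
      (((∃ p ∈ M, pairLocalCost G R p.1 p.2 σ' < pairLocalCost G R p.1 p.2 σ) ∨
          ∃ v ∈ S, localCost G R v σ' < localCost G R v σ) →
        globalCost G R σ' < globalCost G R σ) := by
  classical
  -- the change of a single directed constraint
  set Δ : V → V → ℝ := fun i j => R i j (σ' i) (σ' j) - R i j (σ i) (σ j) with hΔdef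
  -- the set of updating vertices
  set U : Finset V := S ∪ M.biUnion (fun p => {p.1, p.2}) with hUdef
  have hUmem : ∀ k : V, k ∈ U ↔ k ∈ S ∨ ∃ p ∈ M, k = p.1 ∨ k = p.2 := by
    intro k
    simp [hUdef, Finset.mem_union, Finset.mem_biUnion, Finset.mem_insert,
      Finset.mem_singleton]
  have hσ'fix : ∀ k, k ∉ U → σ' k = σ k := by
    intro k hk
    apply hfix
    · intro hkS; exact hk ((hUmem k).2 (Or.inl hkS))
    · intro p hp
      constructor
      · intro h; exact hk ((hUmem k).2 (Or.inr ⟨p, hp, Or.inl h⟩))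
      · intro h; exact hk ((hUmem k).2 (Or.inr ⟨p, hp, Or.inr h⟩))
  have hΔ0 : ∀ i j, i ∉ U → j ∉ U → Δ i j = 0 := by
    intro i j hi hj
    simp [hΔdef, hσ'fix i hi, hσ'fix j hj]
  have hΔsym : ∀ i j, Δ i j = Δ j i := by
    intro i j
    simp only [hΔdef]
    rw [hsym i j (σ' i) (σ' j), hsym i j (σ i) (σ j)]
  have hloc : ∀ i, localCost G R i σ' - localCost G R i σ
      = ∑ j ∈ G.neighborFinset i, Δ i j := by
    intro i
    simp [localCost, hΔdef, Finset.sum_sub_distrib]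
  have hpair : ∀ p ∈ M, pairLocalCost G R p.1 p.2 σ' - pairLocalCost G R p.1 p.2 σ
      = (∑ j ∈ G.neighborFinset p.1, Δ p.1 j)
        + (∑ j ∈ G.neighborFinset p.2, Δ p.2 j) - Δ p.1 p.2 := by
    intro p hp
    have hadj := hM p hp
    have h1 : p.2 ∈ G.neighborFinset p.1 := by
      rw [SimpleGraph.mem_neighborFinset]; exact hadj
    have h2 : p.1 ∈ G.neighborFinset p.2 := by
      rw [SimpleGraph.mem_neighborFinset]; exact hadj.symm
    have e1 : ∑ j ∈ G.neighborFinset p.1, Δ p.1 j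
        = (∑ j ∈ G.neighborFinset p.1 \ {p.2}, Δ p.1 j) + Δ p.1 p.2 :=
      Finset.sum_eq_sum_sdiff_singleton_add h1 _
    have e2 : ∑ j ∈ G.neighborFinset p.2, Δ p.2 j
        = (∑ j ∈ G.neighborFinset p.2 \ {p.1}, Δ p.2 j) + Δ p.2 p.1 :=
      Finset.sum_eq_sum_sdiff_singleton_add h2 _
    have e3 : pairLocalCost G R p.1 p.2 σ' - pairLocalCost G R p.1 p.2 σ
        = Δ p.1 p.2 + (∑ j ∈ G.neighborFinset p.1 \ {p.2}, Δ p.1 j)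
          + (∑ j ∈ G.neighborFinset p.2 \ {p.1}, Δ p.2 j) := by
      simp [pairLocalCost, hΔdef, Finset.sum_sub_distrib]
      ring
    rw [e3, e1, e2, hΔsym p.2 p.1]
    ring
  -- characterize neighbors inside U
  have hNS : ∀ v ∈ S, G.neighborFinset v ∩ U = ∅ := by
    intro v hv
    rw [Finset.eq_empty_iff_forall_notMem]
    intro j hj
    rw [Finset.mem_inter, SimpleGraph.mem_neighborFinset] at hj
    obtain ⟨hadj, hjU⟩ := hj
    rcases (hUmem j).1 hjU with hjS | ⟨p, hp, hj12⟩
    · rcases eq_or_ne v j with rfl | hne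
      · exact G.loopless.irrefl v hadj
      · exact hSS v hv j hjS hne hadj
    · obtain ⟨h1, h2⟩ := hMS p hp v hv
      rcases hj12 with rfl | rfl
      · exact h1 hadj
      · exact h2 hadj
  have hN1 : ∀ p ∈ M, G.neighborFinset p.1 ∩ U = {p.2} := by
    intro p hp
    apply Finset.Subset.antisymm
    · intro j hj
      rw [Finset.mem_inter, SimpleGraph.mem_neighborFinset] at hj
      obtain ⟨hadj, hjU⟩ := hj
      rw [Finset.mem_singleton]
      rcases (hUmem j).1 hjU with hjS | ⟨q, hq, hj12⟩
      · exact absurd hadj.symm (hMS p hp j hjS).1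
      · rcases eq_or_ne p q with rfl | hne
        · rcases hj12 with rfl | rfl
          · exact absurd hadj (G.loopless.irrefl p.1)
          · rfl
        · obtain ⟨n1, n2, _, _⟩ := hMM p hp q hq hne
          rcases hj12 with rfl | rfl
          · exact absurd hadj n1
          · exact absurd hadj n2
    · intro j hj
      rw [Finset.mem_singleton] at hj
      subst hj
      rw [Finset.mem_inter, SimpleGraph.mem_neighborFinset]
      exact ⟨hM p hp, (hUmem p.2).2 (Or.inr ⟨p, hp, Or.inr rfl⟩)⟩
  have hN2 : ∀ p ∈ M, G.neighborFinset p.2 ∩ U = {p.1} := by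
    intro p hp
    apply Finset.Subset.antisymm
    · intro j hj
      rw [Finset.mem_inter, SimpleGraph.mem_neighborFinset] at hj
      obtain ⟨hadj, hjU⟩ := hj
      rw [Finset.mem_singleton]
      rcases (hUmem j).1 hjU with hjS | ⟨q, hq, hj12⟩
      · exact absurd hadj.symm (hMS p hp j hjS).2
      · rcases eq_or_ne p q with rfl | hne
        · rcases hj12 with rfl | rfl
          · rfl
          · exact absurd hadj (G.loopless.irrefl p.2)
        · obtain ⟨_, _, n3, n4⟩ := hMM p hp q hq hne
          rcases hj12 with rfl | rfl
          · exact absurd hadj n3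
          · exact absurd hadj n4
    · intro j hj
      rw [Finset.mem_singleton] at hj
      subst hj
      rw [Finset.mem_inter, SimpleGraph.mem_neighborFinset]
      exact ⟨(hM p hp).symm, (hUmem p.1).2 (Or.inr ⟨p, hp, Or.inl rfl⟩)⟩
  have hIAD : ∀ (s t : Finset V) (f : V → ℝ),
      (∑ j ∈ s ∩ t, f j) + ∑ j ∈ s \ t, f j = ∑ j ∈ s, f j := by
    intro s t f
    rw [add_comm, ← Finset.sdiff_inter_self_left s t]
    exact Finset.sum_sdiff Finset.inter_subset_left
  -- the total directed change
  have key : ∑ i, ∑ j ∈ G.neighborFinset i, Δ i j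
      = 2 * ((∑ p ∈ M, (pairLocalCost G R p.1 p.2 σ' - pairLocalCost G R p.1 p.2 σ))
          + ∑ v ∈ S, (localCost G R v σ' - localCost G R v σ)) := by
    have hsplitU : ∑ i, ∑ j ∈ G.neighborFinset i, Δ i j
        = (∑ i ∈ U, ∑ j ∈ G.neighborFinset i, Δ i j)
          + ∑ i ∈ Uᶜ, ∑ j ∈ G.neighborFinset i, Δ i j :=
      (Finset.sum_add_sum_compl U _).symm
    have hout : ∑ i ∈ Uᶜ, ∑ j ∈ G.neighborFinset i, Δ i j
        = ∑ i ∈ U, ∑ j ∈ G.neighborFinset i ∩ Uᶜ, Δ i j := by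
      have step1 : ∀ i ∈ Uᶜ, ∑ j ∈ G.neighborFinset i, Δ i j
          = ∑ j ∈ G.neighborFinset i ∩ U, Δ i j := by
        intro i hi
        rw [Finset.mem_compl] at hi
        rw [← hIAD (G.neighborFinset i) U]
        have : ∑ j ∈ G.neighborFinset i \ U, Δ i j = 0 := by
          apply Finset.sum_eq_zero
          intro j hj
          rw [Finset.mem_sdiff] at hj
          exact hΔ0 i j hi hj.2
        rw [this, add_zero]
      rw [Finset.sum_congr rfl step1]
      have swap : ∑ i ∈ Uᶜ, ∑ j ∈ G.neighborFinset i ∩ U, Δ i j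
          = ∑ j ∈ U, ∑ i ∈ G.neighborFinset j ∩ Uᶜ, Δ i j := by
        apply Finset.sum_comm'
        intro x y
        simp only [Finset.mem_compl, Finset.mem_inter, SimpleGraph.mem_neighborFinset]
        constructor
        · rintro ⟨hx, hadj, hy⟩; exact ⟨⟨hadj.symm, hx⟩, hy⟩
        · rintro ⟨⟨hadj, hx⟩, hy⟩; exact ⟨hx, hadj.symm, hy⟩
      rw [swap]
      apply Finset.sum_congr rfl
      intro j _
      apply Finset.sum_congr rfl
      intro i _
      exact hΔsym i j
    have hU2 : ∑ i ∈ U, ∑ j ∈ G.neighborFinset i, Δ i j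
          + ∑ i ∈ U, ∑ j ∈ G.neighborFinset i ∩ Uᶜ, Δ i j
        = ∑ i ∈ U, (2 * (∑ j ∈ G.neighborFinset i, Δ i j)
            - ∑ j ∈ G.neighborFinset i ∩ U, Δ i j) := by
      rw [← Finset.sum_add_distrib]
      apply Finset.sum_congr rfl
      intro i _
      have hc : G.neighborFinset i ∩ Uᶜ = G.neighborFinset i \ U := by
        ext x; simp [Finset.mem_sdiff]
      have : ∑ j ∈ G.neighborFinset i ∩ U, Δ i j
          + ∑ j ∈ G.neighborFinset i ∩ Uᶜ, Δ i j
          = ∑ j ∈ G.neighborFinset i, Δ i j := by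
        rw [hc]
        exact hIAD (G.neighborFinset i) U _
      linarith
    -- split the sum over U into S and M parts
    have hdisjSB : Disjoint S (M.biUnion (fun p => {p.1, p.2})) := by
      rw [Finset.disjoint_left]
      intro v hv hvB
      rw [Finset.mem_biUnion] at hvB
      obtain ⟨p, hp, hvp⟩ := hvB
      rw [Finset.mem_insert, Finset.mem_singleton] at hvp
      obtain ⟨h1, h2⟩ := hScover v hv p hp
      rcases hvp with h | h
      · exact h1 h
      · exact h2 h
    have hsumU : ∀ f : V → ℝ, ∑ i ∈ U, f i
        = (∑ v ∈ S, f v) + ∑ p ∈ M, (f p.1 + f p.2) := by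
      intro f
      rw [hUdef, Finset.sum_union hdisjSB]
      congr 1
      rw [Finset.sum_biUnion]
      · apply Finset.sum_congr rfl
        intro p hp
        rw [Finset.sum_insert, Finset.sum_singleton]
        rw [Finset.mem_singleton]
        exact (hM p hp).ne
      · intro p hp q hq hne
        replace hp : p ∈ M := hp
        replace hq : q ∈ M := hq
        simp only [Function.onFun]
        rw [Finset.disjoint_left]
        intro a ha hb
        rw [Finset.mem_insert, Finset.mem_singleton] at ha hb
        obtain ⟨n1, n2, n3, n4⟩ := hmatch p hp q hq hne
        rcases ha with rfl | rfl <;> rcases hb with h | h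
        · exact n1 h
        · exact n2 h
        · exact n3 h
        · exact n4 h
    rw [hsplitU, hout, hU2, hsumU]
    have hSterm : ∀ v ∈ S, (2 * (∑ j ∈ G.neighborFinset v, Δ v j)
        - ∑ j ∈ G.neighborFinset v ∩ U, Δ v j)
        = 2 * (localCost G R v σ' - localCost G R v σ) := by
      intro v hv
      rw [hNS v hv, Finset.sum_empty, sub_zero, hloc]
    have hMterm : ∀ p ∈ M,
        ((2 * (∑ j ∈ G.neighborFinset p.1, Δ p.1 j)
          - ∑ j ∈ G.neighborFinset p.1 ∩ U, Δ p.1 j)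
        + (2 * (∑ j ∈ G.neighborFinset p.2, Δ p.2 j)
          - ∑ j ∈ G.neighborFinset p.2 ∩ U, Δ p.2 j))
        = 2 * (pairLocalCost G R p.1 p.2 σ' - pairLocalCost G R p.1 p.2 σ) := by
      intro p hp
      rw [hN1 p hp, hN2 p hp, Finset.sum_singleton, Finset.sum_singleton,
        hpair p hp, hΔsym p.2 p.1]
      ring
    rw [Finset.sum_congr rfl hSterm, Finset.sum_congr rfl hMterm,
      ← Finset.mul_sum, ← Finset.mul_sum]
    ring
  have hmain : globalCost G R σ' - globalCost G R σ =
      (∑ p ∈ M, (pairLocalCost G R p.1 p.2 σ' - pairLocalCost G R p.1 p.2 σ))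
        + ∑ v ∈ S, (localCost G R v σ' - localCost G R v σ) := by
    have hg : globalCost G R σ' - globalCost G R σ
        = (∑ i, ∑ j ∈ G.neighborFinset i, Δ i j) / 2 := by
      simp [globalCost, hΔdef, ← sub_div, Finset.sum_sub_distrib]
    rw [hg, key]
    ring
  refine ⟨hmain, ?_, ?_⟩
  · have h1 : (∑ p ∈ M, (pairLocalCost G R p.1 p.2 σ' - pairLocalCost G R p.1 p.2 σ)) ≤ 0 := by
      apply Finset.sum_nonpos
      intro p hp
      linarith [hMle p hp]
    have h2 : (∑ v ∈ S, (localCost G R v σ' - localCost G R v σ)) ≤ 0 := by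
      apply Finset.sum_nonpos
      intro v hv
      linarith [hSle v hv]
    linarith [hmain]
  · rintro (⟨p, hp, hlt⟩ | ⟨v, hv, hlt⟩)
    · have h1 : (∑ p ∈ M, (pairLocalCost G R p.1 p.2 σ' - pairLocalCost G R p.1 p.2 σ)) < 0 := by
        have := Finset.sum_lt_sum (f := fun p =>
            pairLocalCost G R p.1 p.2 σ' - pairLocalCost G R p.1 p.2 σ)
          (g := fun _ => (0 : ℝ))
          (fun q hq => show pairLocalCost G R q.1 q.2 σ' - pairLocalCost G R q.1 q.2 σ ≤ (0:ℝ)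
            by linarith [hMle q hq])
          ⟨p, hp, show pairLocalCost G R p.1 p.2 σ' - pairLocalCost G R p.1 p.2 σ < (0:ℝ)
            by linarith⟩
        simpa using this
      have h2 : (∑ v ∈ S, (localCost G R v σ' - localCost G R v σ)) ≤ 0 := by
        apply Finset.sum_nonpos
        intro v hv
        linarith [hSle v hv]
      linarith [hmain]
    · have h1 : (∑ p ∈ M, (pairLocalCost G R p.1 p.2 σ' - pairLocalCost G R p.1 p.2 σ)) ≤ 0 := by
        apply Finset.sum_nonpos
        intro q hq
        linarith [hMle q hq]
      have h2 : (∑ v ∈ S, (localCost G R v σ' - localCost G R v σ)) < 0 := by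
        have := Finset.sum_lt_sum (f := fun v => localCost G R v σ' - localCost G R v σ)
          (g := fun _ => (0 : ℝ))
          (fun u hu => show localCost G R u σ' - localCost G R u σ ≤ (0:ℝ)
            by linarith [hSle u hu])
          ⟨v, hv, show localCost G R v σ' - localCost G R v σ < (0:ℝ) by linarith⟩
        simpa using this
      linarith [hmain]
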